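/- If a Banach space Y is almost square, then for every finite dimensional subspace E of Y and every ε > 0 there exists y in the unit sphere of Y such that (1−ε)·max(‖x‖, |λ|) ≤ ‖x + λy‖ ≤ (1+ε)·max(‖x‖, |λ|) for all λ ∈ ℝ and all x ∈ E. -/

import Mathlib

open TopologicalSpace Metric

def IsASQ (Y : Type*) [NormedAddCommGroup Y] [NormedSpace ℝ Y] : Prop :=
  ∀ ε : ℝ, 0 < ε → ∀ N : ℕ, ∀ y : Fin N → Y, (∀ n, ‖y n‖ = 1) →
    ∃ z : Y, ‖z‖ = 1 ∧ ∀ n, ‖y n - z‖ ≤ 1 + ε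

theorem asq_findim
    (Y : Type*) [NormedAddCommGroup Y] [NormedSpace ℝ Y] [CompleteSpace Y]
    (hY : IsASQ Y) :
    ∀ E : Subspace ℝ Y, FiniteDimensional ℝ E → ∀ ε : ℝ, 0 < ε →
      ∃ y : Y, ‖y‖ = 1 ∧ ∀ (l : ℝ) (x : Y), x ∈ E →
        (1 - ε) * max ‖x‖ |l| ≤ ‖x + l • y‖ ∧ ‖x + l • y‖ ≤ (1 + ε) * max ‖x‖ |l| := by
  intro E hE ε hε
  classical
  set δ : ℝ := ε / 3 with hδdef
  have hδ : 0 < δ := by positivity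
  -- finite net of the unit sphere of E
  have hc : IsCompact (Metric.sphere (0 : E) 1) := isCompact_sphere _ _
  obtain ⟨t, hts, htfin, htcov⟩ :=
    hc.elim_finite_subcover_image (ι := E) (b := Metric.sphere (0 : E) 1)
      (c := fun u => Metric.ball u δ) (fun u _ => isOpen_ball)
      (fun w hw => Set.mem_biUnion hw (mem_ball_self hδ))
  -- the net as a finite set in Y
  set sY : Finset Y := htfin.toFinset.image (fun u : E => (u : Y)) with hsY
  have hsYnorm : ∀ w ∈ sY, ‖w‖ = 1 := by
    intro w hw
    simp only [hsY, Finset.mem_image, Set.Finite.mem_toFinset] at hw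
    obtain ⟨u, hu, rfl⟩ := hw
    have := hts hu
    simp only [mem_sphere_iff_norm, sub_zero] at this
    simpa using this
  -- apply ASQ
  obtain ⟨z, hz1, hz2⟩ := hY δ hδ sY.card (fun i => (sY.equivFin.symm i : Y))
    (fun i => hsYnorm _ (sY.equivFin.symm i).2)
  have hz2' : ∀ w ∈ sY, ‖w - z‖ ≤ 1 + δ := by
    intro w hw
    have := hz2 (sY.equivFin ⟨w, hw⟩)
    simpa using this
  -- key estimate on the sphere of E
  have hkey : ∀ x : Y, x ∈ E → ‖x‖ = 1 → ‖x - z‖ ≤ 1 + 2 * δ := by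
    intro x hx hx1
    have hmem : (⟨x, hx⟩ : E) ∈ Metric.sphere (0 : E) 1 := by
      simp [mem_sphere_iff_norm, Submodule.norm_coe, hx1]
    obtain ⟨u, hu, hxu⟩ := Set.mem_iUnion₂.1 (htcov hmem)
    have hxu' : ‖x - (u : Y)‖ < δ := by
      have := mem_ball_iff_norm.1 hxu
      have h2 : ‖(⟨x, hx⟩ : E) - u‖ = ‖x - (u : Y)‖ := rfl
      rw [h2] at this; exact this
    have huY : ((u : Y)) ∈ sY := by
      simp only [hsY, Finset.mem_image, Set.Finite.mem_toFinset]
      exact ⟨u, hu, rfl⟩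
    calc ‖x - z‖ = ‖(x - (u : Y)) + ((u : Y) - z)‖ := by congr 1; abel
      _ ≤ ‖x - (u : Y)‖ + ‖(u : Y) - z‖ := norm_add_le _ _
      _ ≤ δ + (1 + δ) := add_le_add hxu'.le (hz2' _ huY)
      _ = 1 + 2 * δ := by ring
  have hkey2 : ∀ x : Y, x ∈ E → ‖x‖ = 1 → ∀ σ : ℝ, σ = 1 ∨ σ = -1 →
      ‖x + σ • z‖ ≤ 1 + 2 * δ := by
    intro x hx hx1 σ hσ
    rcases hσ with rfl | rfl
    · have : ‖x + (1 : ℝ) • z‖ = ‖(-x) - z‖ := by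
        rw [one_smul, ← norm_neg]; congr 1; abel
      rw [this]
      exact hkey (-x) (E.neg_mem hx) (by simpa using hx1)
    · have : ‖x + (-1 : ℝ) • z‖ = ‖x - z‖ := by
        congr 1; simp [sub_eq_add_neg]
      rw [this]
      exact hkey x hx hx1
  -- upper bound
  have hup : ∀ (l : ℝ) (x : Y), x ∈ E → ‖x + l • z‖ ≤ (1 + 2 * δ) * max ‖x‖ |l| := by
    intro l x hx
    by_cases hx0 : x = 0
    · subst hx0
      have : ‖(0 : Y) + l • z‖ = |l| := by simp [norm_smul, hz1]
      rw [this]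
      nlinarith [le_max_right ‖(0:Y)‖ |l|, abs_nonneg l, hδ.le]
    · have ha : 0 < ‖x‖ := norm_pos_iff.2 hx0
      set a := ‖x‖
      set b := |l|
      have hb : 0 ≤ b := abs_nonneg l
      obtain ⟨σ, hσ, hlσ⟩ : ∃ σ : ℝ, (σ = 1 ∨ σ = -1) ∧ l = σ * b := by
        rcases le_or_gt 0 l with h | h
        · exact ⟨1, Or.inl rfl, by simp [b, abs_of_nonneg h]⟩
        · exact ⟨-1, Or.inr rfl, by simp [b, abs_of_neg h]⟩
      set xh : Y := a⁻¹ • x with hxh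
      have hxhE : xh ∈ E := E.smul_mem _ hx
      have hxh1 : ‖xh‖ = 1 := by
        rw [hxh, norm_smul, Real.norm_eq_abs, abs_of_pos (inv_pos.2 ha)]
        field_simp
        rfl
      have hxz : ‖xh + σ • z‖ ≤ 1 + 2 * δ := hkey2 xh hxhE hxh1 σ hσ
      rcases le_total b a with hba | hab
      · have hdecomp : x + l • z = (a - b) • xh + b • (xh + σ • z) := by
          rw [hlσ, hxh]
          match_scalars <;> field_simp <;> ring
        have n1 : ‖(a - b) • xh‖ = a - b := by
          rw [norm_smul, hxh1, mul_one, Real.norm_eq_abs,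
            abs_of_nonneg (show (0:ℝ) ≤ a - b by linarith)]
        have n2 : ‖b • (xh + σ • z)‖ = b * ‖xh + σ • z‖ := by
          rw [norm_smul, Real.norm_eq_abs, abs_of_nonneg hb]
        calc ‖x + l • z‖ ≤ ‖(a - b) • xh‖ + ‖b • (xh + σ • z)‖ := by
              rw [hdecomp]; exact norm_add_le _ _
          _ ≤ (a - b) + b * (1 + 2 * δ) := by rw [n1, n2]; nlinarith
          _ = a + 2 * δ * b := by ring
          _ ≤ (1 + 2 * δ) * a := by nlinarith
          _ ≤ (1 + 2 * δ) * max a b := by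
              have := le_max_left a b; nlinarith
      · have hdecomp : x + l • z = a • (xh + σ • z) + ((b - a) * σ) • z := by
          rw [hlσ, hxh]
          match_scalars <;> field_simp <;> ring
        have habs : |σ| = 1 := by rcases hσ with h | h <;> rw [h] <;> norm_num
        have n1 : ‖a • (xh + σ • z)‖ = a * ‖xh + σ • z‖ := by
          rw [norm_smul, Real.norm_eq_abs, abs_of_pos ha]
        have n2 : ‖((b - a) * σ) • z‖ = b - a := by
          rw [norm_smul, hz1, mul_one, Real.norm_eq_abs, abs_mul, habs,
            abs_of_nonneg (show (0:ℝ) ≤ b - a by linarith)]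
          ring
        calc ‖x + l • z‖ ≤ ‖a • (xh + σ • z)‖ + ‖((b - a) * σ) • z‖ := by
              rw [hdecomp]; exact norm_add_le _ _
          _ ≤ a * (1 + 2 * δ) + (b - a) := by rw [n1, n2]; nlinarith
          _ = b + 2 * δ * a := by ring
          _ ≤ (1 + 2 * δ) * b := by nlinarith
          _ ≤ (1 + 2 * δ) * max a b := by
              have := le_max_right a b; nlinarith
  -- final
  refine ⟨z, hz1, fun l x hx => ?_⟩
  have hU := hup l x hx
  have hU' := hup (-l) x hx
  rw [abs_neg] at hU'
  have hmax : (0 : ℝ) ≤ max ‖x‖ |l| := le_trans (abs_nonneg l) (le_max_right _ _)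
  have h2a : 2 * ‖x‖ ≤ ‖x + l • z‖ + ‖x + (-l) • z‖ := by
    have : (2 : ℝ) • x = (x + l • z) + (x + (-l) • z) := by module
    calc 2 * ‖x‖ = ‖(2 : ℝ) • x‖ := by
          rw [norm_smul]; norm_num
      _ = ‖(x + l • z) + (x + (-l) • z)‖ := by rw [this]
      _ ≤ _ := norm_add_le _ _
  have h2b : 2 * |l| ≤ ‖x + l • z‖ + ‖x + (-l) • z‖ := by
    have : (2 * l) • z = (x + l • z) - (x + (-l) • z) := by module
    calc 2 * |l| = ‖(2 * l) • z‖ := by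
          rw [norm_smul, hz1, Real.norm_eq_abs, abs_mul]; norm_num
      _ = ‖(x + l • z) - (x + (-l) • z)‖ := by rw [this]
      _ ≤ _ := norm_sub_le _ _
  have h2m : 2 * max ‖x‖ |l| ≤ ‖x + l • z‖ + ‖x + (-l) • z‖ := by
    rcases max_cases ‖x‖ |l| with ⟨h, _⟩ | ⟨h, _⟩ <;> rw [h]
    exacts [h2a, h2b]
  constructor
  · have : (1 - 2 * δ) * max ‖x‖ |l| ≤ ‖x + l • z‖ := by nlinarith
    nlinarith
  · nlinarith
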